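/- Let G be a finite group that is not perfect (G ≠ G'), and suppose G is generated by k elements a₁,…,a_k whose orders are pairwise coprime. Then for every n ≥ k, rank(G^n) = n. -/

import Mathlib

open Subgroup

/-- Minimal length of a word over `X` (positive letters only) representing `g`. -/
noncomputable def wLen {G : Type*} [Group G] (X : Set G) (g : G) : ℕ :=
  sInf {n | ∃ l : List G, (∀ x ∈ l, x ∈ X) ∧ l.length = n ∧ l.prod = g}

/-- Minimal length of a word over `X ∪ X⁻¹` representing `g`. -/
noncomputable def sLen {G : Type*} [Group G] (X : Set G) (g : G) : ℕ :=
  sInf {n | ∃ l : List G, (∀ x ∈ l, x ∈ X ∨ x⁻¹ ∈ X) ∧ l.length = n ∧ l.prod = g}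

/-- Diameter of `G` with respect to `X` (positive words). -/
noncomputable def diamW (G : Type*) [Group G] (X : Set G) : ℕ :=
  sSup (Set.range (wLen X))

/-- Symmetric diameter of `G` with respect to `X`. -/
noncomputable def diamS (G : Type*) [Group G] (X : Set G) : ℕ :=
  sSup (Set.range (sLen X))

/-- Maximum diameter over all generating sets. -/
noncomputable def DW (G : Type*) [Group G] : ℕ :=
  sSup {d | ∃ X : Set G, Subgroup.closure X = ⊤ ∧ d = diamW G X}

/-- Maximum symmetric diameter over all generating sets. -/
noncomputable def DS (G : Type*) [Group G] : ℕ :=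
  sSup {d | ∃ X : Set G, Subgroup.closure X = ⊤ ∧ d = diamS G X}

/-- Minimal size of a generating set of `G`. -/
noncomputable def rk (G : Type*) [Group G] : ℕ :=
  sInf {n | ∃ S : Finset G, S.card = n ∧ Subgroup.closure (S : Set G) = ⊤}

lemma aux_lower {G : Type*} [Group G] [Finite G]
    (hperf : commutator G ≠ ⊤) (n : ℕ) (S : Finset (Fin n → G))
    (hcl : Subgroup.closure (S : Set (Fin n → G)) = ⊤) : n ≤ S.card := by
  classical
  have hAnt : Nontrivial (Abelianization G) := by
    rcases subsingleton_or_nontrivial (Abelianization G) with h | h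
    · exfalso
      apply hperf
      rw [eq_top_iff]
      intro x _
      have hx : Abelianization.of x = 1 := Subsingleton.elim _ _
      exact (QuotientGroup.eq_one_iff x).mp hx
    · exact h
  set p := (Nat.card (Abelianization G)).minFac with hpdef
  have hcard1 : Nat.card (Abelianization G) ≠ 1 := fun h =>
    not_subsingleton _ (Nat.card_eq_one_iff_unique.mp h).1
  have hp : p.Prime := Nat.minFac_prime hcard1
  haveI : Fact p.Prime := ⟨hp⟩
  obtain ⟨x, hx⟩ := exists_prime_orderOf_dvd_card' (G := Abelianization G) p (Nat.minFac_dvd _)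
  set R := (powMonoidHom p : Abelianization G →* Abelianization G).range with hR
  set B := Abelianization G ⧸ R with hB
  have hBexp : ∀ b : B, b ^ p = 1 := by
    intro b
    induction b using QuotientGroup.induction_on with
    | _ z =>
      have h1 : ((z : B))^p = ((QuotientGroup.mk' R) (z ^ p)) := (map_pow (QuotientGroup.mk' R) z p).symm
      rw [h1]
      exact (QuotientGroup.eq_one_iff _).mpr ⟨z, rfl⟩
  have hBnt : Nontrivial B := by
    rcases subsingleton_or_nontrivial B with h | h
    · exfalso
      have hRtop : R = ⊤ := by
        rw [eq_top_iff]; intro y _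
        have hy : (y : B) = 1 := Subsingleton.elim _ _
        exact (QuotientGroup.eq_one_iff y).mp hy
      have hsurj : Function.Surjective (powMonoidHom p : Abelianization G →* Abelianization G) :=
        MonoidHom.range_eq_top.mp hRtop
      have hinj := Finite.injective_iff_surjective.mpr hsurj
      have hx1 : x ^ p = 1 := by rw [← hx]; exact pow_orderOf_eq_one x
      have hx2 : x = 1 := hinj (show x ^ p = (1 : Abelianization G) ^ p by rw [hx1, one_pow])
      rw [hx2, orderOf_one] at hx
      exact hp.one_lt.ne' hx.symm
    · exact h
  haveI : Finite B := Quotient.finite _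
  letI : Module (ZMod p) (Additive B) := AddCommGroup.zmodModule (by
    intro y
    have h1 : Additive.ofMul (Additive.toMul y ^ p) = Additive.ofMul ((1 : B)) := by
      rw [hBexp]
    rw [ofMul_pow, ofMul_toMul, ofMul_one] at h1
    exact h1)
  have hofsurj : Function.Surjective (Abelianization.of (G := G)) := fun b =>
    QuotientGroup.induction_on b fun z => ⟨z, rfl⟩
  let φ0 : G →* B := (QuotientGroup.mk' R).comp Abelianization.of
  have hφ0 : Function.Surjective φ0 := (QuotientGroup.mk'_surjective R).comp hofsurj
  let φ1 : (Fin n → G) →* (Fin n → B) := MonoidHom.compLeft φ0 (Fin n)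
  have hφ1 : Function.Surjective φ1 := fun y =>
    ⟨fun i => (hφ0 (y i)).choose, funext fun i => (hφ0 (y i)).choose_spec⟩
  let Ψ : Multiplicative (Fin n → Additive B) ≃* (Fin n → B) :=
    (MulEquiv.piMultiplicative fun _ => Additive B).trans
      (MulEquiv.piCongrRight fun _ => MulEquiv.multiplicativeAdditive B)
  let Φ : (Fin n → G) →* Multiplicative (Fin n → Additive B) := Ψ.symm.toMonoidHom.comp φ1
  have hΦ : Function.Surjective Φ := Ψ.symm.surjective.comp hφ1
  have h1 : Subgroup.closure (⇑Φ '' (S : Set (Fin n → G))) = ⊤ := by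
    rw [← MonoidHom.map_closure, hcl, Subgroup.map_top_of_surjective _ hΦ]
  let T : Finset (Fin n → Additive B) := S.image fun z => Multiplicative.toAdd (Φ z)
  have hTS : (T : Set (Fin n → Additive B)) =
      Multiplicative.toAdd '' (⇑Φ '' (S : Set (Fin n → G))) := by
    rw [Finset.coe_image, Set.image_image]
  have hspan : Submodule.span (ZMod p) (T : Set (Fin n → Additive B)) = ⊤ := by
    rw [eq_top_iff]
    intro v _
    have hmono : Subgroup.closure (⇑Φ '' (S : Set (Fin n → G))) ≤
        AddSubgroup.toSubgroup
          (Submodule.span (ZMod p) (T : Set (Fin n → Additive B))).toAddSubgroup := by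
      rw [Subgroup.closure_le]
      rintro y ⟨z, hz, rfl⟩
      show Multiplicative.toAdd (Φ z) ∈ Submodule.span (ZMod p) (T : Set (Fin n → Additive B))
      apply Submodule.subset_span
      rw [hTS]
      exact ⟨Φ z, ⟨z, hz, rfl⟩, rfl⟩
    have hv : Multiplicative.ofAdd v ∈
        Subgroup.closure (⇑Φ '' (S : Set (Fin n → G))) := by rw [h1]; trivial
    exact hmono hv
  haveI : Fintype ((T : Set (Fin n → Additive B)) : Set _) := FinsetCoe.fintype T
  have h2 := finrank_span_le_card (R := ZMod p) (T : Set (Fin n → Additive B))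
  rw [hspan, finrank_top] at h2
  have h3 : (T : Set (Fin n → Additive B)).toFinset.card = T.card := by simp
  rw [h3] at h2
  haveI : Finite (Additive B) := Finite.of_equiv B Additive.ofMul
  haveI hMF : Module.Finite (ZMod p) (Additive B) := Module.Finite.of_finite
  haveI : Fin n → Module.Finite (ZMod p) (Additive B) := fun _ => hMF
  haveI hFree : Module.Free (ZMod p) (Additive B) := Module.Free.of_divisionRing _ _
  haveI : Fin n → Module.Free (ZMod p) (Additive B) := fun _ => hFree
  have h4 : Module.finrank (ZMod p) (Fin n → Additive B)
      = n * Module.finrank (ZMod p) (Additive B) := by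
    have := @Module.finrank_pi_fintype (ZMod p) _ _ (Fin n) _ (fun _ => Additive B) _ (fun _ => ‹Module (ZMod p) (Additive B)›) (fun _ => hFree) (fun _ => hMF)
    rw [this, Finset.sum_const, Finset.card_univ, Fintype.card_fin, smul_eq_mul]
  haveI hNZ : NoZeroSMulDivisors (ZMod p) (Additive B) := ⟨fun {c x} h => by
    rcases eq_or_ne c 0 with hc | hc
    · exact Or.inl hc
    · refine Or.inr ?_
      have h2 := congrArg (fun y => c⁻¹ • y) h
      simpa [smul_smul, inv_mul_cancel₀ hc] using h2⟩
  haveI hNT : Nontrivial (Additive B) := by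
    obtain ⟨u, v, huv⟩ := hBnt.exists_pair_ne
    exact ⟨⟨Additive.ofMul u, Additive.ofMul v, fun hh => huv (congrArg Additive.toMul hh)⟩⟩
  have h5 : 1 ≤ Module.finrank (ZMod p) (Additive B) :=
    @Module.finrank_pos (ZMod p) (Additive B) _ _ _ _ hMF (by infer_instance) (by infer_instance) hNT
  calc n = n * 1 := (mul_one n).symm
    _ ≤ n * Module.finrank (ZMod p) (Additive B) := Nat.mul_le_mul_left n h5
    _ = Module.finrank (ZMod p) (Fin n → Additive B) := h4.symm
    _ ≤ T.card := h2
    _ ≤ S.card := Finset.card_image_le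

lemma aux_upper {G : Type*} [Group G] [Fintype G] [Nontrivial G] {k n : ℕ}
    (hkn : k ≤ n) (hn : 0 < n) (a : Fin k → G)
    (hgen : Subgroup.closure (Set.range a) = ⊤)
    (hcop : ∀ i j : Fin k, i ≠ j → Nat.Coprime (orderOf (a i)) (orderOf (a j))) :
    ∃ S : Finset (Fin n → G), S.card = n ∧ Subgroup.closure (S : Set (Fin n → G)) = ⊤ := by
  classical
  haveI : NeZero n := ⟨hn.ne'⟩
  let emb : Fin k → Fin n := Fin.castLE hkn
  have hembinj : Function.Injective emb := Fin.castLE_injective hkn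
  let g : Fin n → Fin n → G := fun j i =>
    if h : ∃ m : Fin k, i = j + emb m then a h.choose else 1
  have hg_at : ∀ (j : Fin n) (m : Fin k), g j (j + emb m) = a m := by
    intro j m
    have hex : ∃ m' : Fin k, j + emb m = j + emb m' := ⟨m, rfl⟩
    have h1 : g j (j + emb m) = a hex.choose := dif_pos hex
    rw [h1]
    congr 1
    exact (hembinj (add_left_cancel hex.choose_spec)).symm
  have key : ∀ m : Fin k, ∃ e : ℕ, (a m) ^ e = a m ∧ ∀ m' : Fin k, m' ≠ m → (a m') ^ e = 1 := by
    intro m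
    set L := ∏ m' ∈ Finset.univ.erase m, orderOf (a m') with hL
    have hdvdL : ∀ m' : Fin k, m' ≠ m → orderOf (a m') ∣ L := fun m' hm' =>
      Finset.dvd_prod_of_mem _ (Finset.mem_erase.mpr ⟨hm', Finset.mem_univ _⟩)
    have hco : Nat.Coprime (orderOf (a m)) L :=
      Nat.Coprime.prod_right fun m' hm' => hcop m m' (Ne.symm (Finset.ne_of_mem_erase hm'))
    by_cases h1 : orderOf (a m) = 1
    · refine ⟨L, ?_, ?_⟩
      · have : a m = 1 := orderOf_eq_one_iff.mp h1
        rw [this, one_pow]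
      · intro m' hm'
        exact orderOf_dvd_iff_pow_eq_one.mp (hdvdL m' hm')
    · obtain ⟨e, he1, he2⟩ := Nat.chineseRemainder hco 1 0
      have hlt : 1 < orderOf (a m) := lt_of_le_of_ne (orderOf_pos (a m)) (Ne.symm h1)
      refine ⟨e, ?_, ?_⟩
      · have h2 : e % orderOf (a m) = 1 % orderOf (a m) := he1
        rw [← pow_mod_orderOf, h2, Nat.mod_eq_of_lt hlt, pow_one]
      · intro m' hm'
        exact orderOf_dvd_iff_pow_eq_one.mp
          (dvd_trans (hdvdL m' hm') ((Nat.modEq_zero_iff_dvd).mp he2))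
  have hsingle : ∀ (i : Fin n) (m : Fin k),
      Pi.mulSingle i (a m) ∈ Subgroup.closure (Set.range g) := by
    intro i m
    obtain ⟨e, he1, he2⟩ := key m
    set j := i - emb m with hj
    have hji : j + emb m = i := sub_add_cancel i (emb m)
    have heq : (g j) ^ e = Pi.mulSingle i (a m) := by
      funext i'
      rw [Pi.pow_apply]
      by_cases hi : i' = i
      · rw [hi, Pi.mulSingle_eq_same, ← hji, hg_at]
        exact he1
      · rw [Pi.mulSingle_eq_of_ne hi]
        by_cases hex : ∃ m', i' = j + emb m'
        · have hgv : g j i' = a hex.choose := dif_pos hex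
          rw [hgv]
          apply he2
          intro hcm
          apply hi
          rw [hex.choose_spec, hcm, hji]
        · have hgv : g j i' = 1 := dif_neg hex
          rw [hgv, one_pow]
    exact heq ▸ pow_mem (Subgroup.subset_closure (Set.mem_range_self j)) e
  have hgentop : Subgroup.closure (Set.range g) = ⊤ := by
    rw [eq_top_iff]
    intro x _
    apply Subgroup.pi_mem_of_mulSingle_mem
    intro i
    have hK : Subgroup.closure (Set.range a) ≤
        (Subgroup.closure (Set.range g)).comap (MonoidHom.mulSingle (fun _ : Fin n => G) i) := by
      rw [Subgroup.closure_le]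
      rintro y ⟨m, rfl⟩
      exact hsingle i m
    have hx : x i ∈ Subgroup.closure (Set.range a) := by rw [hgen]; trivial
    exact hK hx
  let S0 : Finset (Fin n → G) := Finset.image g Finset.univ
  have hS0 : Subgroup.closure (S0 : Set (Fin n → G)) = ⊤ := by
    rw [Finset.coe_image, Finset.coe_univ, Set.image_univ, hgentop]
  have hS0card : S0.card ≤ n := le_trans Finset.card_image_le (by simp)
  have hcardle : n ≤ Fintype.card (Fin n → G) := by
    have h2 : 2 ≤ Fintype.card G := Fintype.one_lt_card
    calc n ≤ 2 ^ n := (Nat.lt_two_pow_self (n := n)).le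
      _ ≤ Fintype.card G ^ n := Nat.pow_le_pow_left h2 n
      _ = Fintype.card (Fin n → G) := by
          rw [Fintype.card_pi, Finset.prod_const, Finset.card_univ, Fintype.card_fin]
  obtain ⟨S, hsub, hScard⟩ := Finset.exists_superset_card_eq hS0card hcardle
  refine ⟨S, hScard, ?_⟩
  rw [eq_top_iff]
  exact le_trans (le_of_eq hS0.symm) (Subgroup.closure_mono (Finset.coe_subset.mpr hsub))

theorem stmt6 {G : Type*} [Group G] [Fintype G]
    (hperf : commutator G ≠ ⊤) (k : ℕ) (a : Fin k → G)
    (hgen : Subgroup.closure (Set.range a) = ⊤)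
    (hcop : ∀ i j : Fin k, i ≠ j → Nat.Coprime (orderOf (a i)) (orderOf (a j))) :
    ∀ n : ℕ, k ≤ n → rk (Fin n → G) = n := by
  intro n hkn
  classical
  haveI hGnt : Nontrivial G := by
    rcases subsingleton_or_nontrivial G with h | h
    · exfalso
      apply hperf
      rw [eq_top_iff]
      intro y _
      have hy : y = 1 := Subsingleton.elim y 1
      rw [hy]
      exact one_mem _
    · exact h
  rcases Nat.eq_zero_or_pos n with hn | hn
  · subst hn
    have hmem : 0 ∈ {m | ∃ S : Finset (Fin 0 → G), S.card = m ∧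
        Subgroup.closure (S : Set (Fin 0 → G)) = ⊤} := by
      refine ⟨(∅ : Finset (Fin 0 → G)), rfl, ?_⟩
      rw [eq_top_iff]
      intro y _
      have hy : y = 1 := funext fun i => i.elim0
      rw [hy]
      exact one_mem _
    exact Nat.sInf_eq_zero.mpr (Or.inl hmem)
  · obtain ⟨S, hScard, hScl⟩ := aux_upper hkn hn a hgen hcop
    have hmem : n ∈ {m | ∃ S : Finset (Fin n → G), S.card = m ∧
        Subgroup.closure (S : Set (Fin n → G)) = ⊤} := ⟨S, hScard, hScl⟩
    apply le_antisymm
    · exact Nat.sInf_le hmem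
    · apply le_csInf ⟨n, hmem⟩
      rintro m ⟨S', hc, hcl⟩
      subst hc
      exact aux_lower hperf n S' hcl
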